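/- The pairing ⟨φ, ψ⟩ = Σ_{n=0}^∞ (−1)ⁿ Σ_{k=0}^n C(n,k) aₖ bₙ₋ₖ (where (aₖ), (bₗ) are the Mahler coefficients of φ, ψ) converges, is a symmetric ℂₚ-bilinear form on C(ℤₚ, ℂₚ), and is non-degenerate. -/

import Mathlib

open Filter Finset

/-! ### Auxiliary integer binomial identities -/

/-- Key identity 1: `∑_{m=0}^{j} (-1)^m C(j,m) C(m+i,k) = (-1)^j C(i, k-j)` (0 if `j > k`). -/
private lemma keyD (k : ℕ) : ∀ (j i : ℕ),
    (∑ m ∈ Finset.range (j+1), (-1:ℤ)^m * (j.choose m : ℤ) * ((m+i).choose k : ℤ))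
      = (-1:ℤ)^j * (if j ≤ k then ((i.choose (k-j) : ℕ) : ℤ) else 0) := by
  intro j
  induction j with
  | zero => intro i; simp
  | succ j ih =>
    intro i
    have hpeel : ∀ i' : ℕ, ∀ J : ℕ,
        (∑ m ∈ Finset.range (J+1), (-1:ℤ)^m * (J.choose m : ℤ) * ((m+i').choose k : ℤ))
          = ((i'.choose k : ℤ))
            + ∑ m ∈ Finset.range J, (-1:ℤ)^(m+1) * (J.choose (m+1) : ℤ) * (((m+1)+i').choose k : ℤ) := by
      intro i' J
      rw [Finset.sum_range_succ']
      simp [add_comm]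
    have step : (∑ m ∈ Finset.range (j+2), (-1:ℤ)^m * ((j+1).choose m : ℤ) * ((m+i).choose k : ℤ))
        = (∑ m ∈ Finset.range (j+1), (-1:ℤ)^m * (j.choose m : ℤ) * ((m+i).choose k : ℤ))
          - (∑ m ∈ Finset.range (j+1), (-1:ℤ)^m * (j.choose m : ℤ) * ((m+(i+1)).choose k : ℤ)) := by
      rw [show j+2 = (j+1)+1 from rfl, hpeel i (j+1), hpeel i j]
      have expand : ∀ m ∈ Finset.range (j+1),
          (-1:ℤ)^(m+1) * ((j+1).choose (m+1) : ℤ) * (((m+1)+i).choose k : ℤ)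
          = (-1:ℤ)^(m+1) * (j.choose m : ℤ) * ((m+(i+1)).choose k : ℤ)
            + (-1:ℤ)^(m+1) * (j.choose (m+1) : ℤ) * (((m+1)+i).choose k : ℤ) := by
        intro m _
        rw [Nat.choose_succ_succ]
        push_cast
        have : m + 1 + i = m + (i + 1) := by omega
        rw [this]; ring
      rw [Finset.sum_congr rfl expand, Finset.sum_add_distrib]
      have hB : (∑ m ∈ Finset.range (j+1), (-1:ℤ)^(m+1) * (j.choose (m+1) : ℤ) * (((m+1)+i).choose k : ℤ))
          = ∑ m ∈ Finset.range j, (-1:ℤ)^(m+1) * (j.choose (m+1) : ℤ) * (((m+1)+i).choose k : ℤ) := by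
        rw [Finset.sum_range_succ, Nat.choose_succ_self]
        simp
      have hA : (∑ m ∈ Finset.range (j+1), (-1:ℤ)^(m+1) * (j.choose m : ℤ) * ((m+(i+1)).choose k : ℤ))
          = - ∑ m ∈ Finset.range (j+1), (-1:ℤ)^m * (j.choose m : ℤ) * ((m+(i+1)).choose k : ℤ) := by
        rw [← Finset.sum_neg_distrib]
        exact Finset.sum_congr rfl fun m _ => by ring
      rw [hB, hA]
      ring
    rw [step, ih i, ih (i+1)]
    by_cases h1 : j + 1 ≤ k
    · have h0 : j ≤ k := by omega
      rw [if_pos h0, if_pos h0, if_pos h1]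
      have hk : k - j = (k - (j+1)) + 1 := by omega
      rw [hk, Nat.choose_succ_succ i (k - (j+1))]
      push_cast
      ring
    · by_cases h0 : j ≤ k
      · have : k = j := by omega
        subst this
        rw [if_pos h0, if_pos h0, if_neg h1]
        simp [Nat.sub_self]
      · rw [if_neg h0, if_neg h0, if_neg h1]
        ring

/-- Key identity 2: for `j ≤ N`, `∑_{s=0}^{N} (-1)^{s+r} C(s,r) C(j,s) = δ_{jr}`. -/
private lemma id2 (r N j : ℕ) (hjN : j ≤ N) :
    (∑ s ∈ Finset.range (N+1), (-1:ℤ)^(s+r) * (s.choose r : ℤ) * (j.choose s : ℤ))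
      = if j = r then 1 else 0 := by
  have hsub : (∑ s ∈ Finset.range (N+1), (-1:ℤ)^(s+r) * (s.choose r : ℤ) * (j.choose s : ℤ))
      = ∑ s ∈ Finset.range (j+1), (-1:ℤ)^(s+r) * (s.choose r : ℤ) * (j.choose s : ℤ) := by
    refine (Finset.sum_subset (Finset.range_subset_range.mpr (by omega)) fun s hs hns => ?_).symm
    have hjs : j < s := by
      simp only [Finset.mem_range] at hs hns; omega
    rw [Nat.choose_eq_zero_of_lt hjs]
    simp
  rw [hsub]
  by_cases hrj : r ≤ j
  · have hsplit : ∑ s ∈ Finset.range (j+1), (-1:ℤ)^(s+r) * (s.choose r : ℤ) * (j.choose s : ℤ)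
        = ∑ s ∈ Finset.Ico r (j+1), (-1:ℤ)^(s+r) * (s.choose r : ℤ) * (j.choose s : ℤ) := by
      rw [Finset.range_eq_Ico, ← Finset.sum_Ico_consecutive _ (Nat.zero_le r) (by omega : r ≤ j+1)]
      have h0 : ∑ s ∈ Finset.Ico 0 r, (-1:ℤ)^(s+r) * (s.choose r : ℤ) * (j.choose s : ℤ) = 0 := by
        refine Finset.sum_eq_zero fun s hs => ?_
        have : s < r := (Finset.mem_Ico.mp hs).2
        rw [Nat.choose_eq_zero_of_lt this]
        simp
      rw [h0, zero_add]
    rw [hsplit, Finset.sum_Ico_eq_sum_range]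
    have hlen : j + 1 - r = (j - r) + 1 := by omega
    rw [hlen]
    have hterm : ∀ t ∈ Finset.range ((j-r)+1),
        (-1:ℤ)^((r+t)+r) * ((r+t).choose r : ℤ) * (j.choose (r+t) : ℤ)
          = (j.choose r : ℤ) * ((-1:ℤ)^t * ((j-r).choose t : ℤ)) := by
      intro t ht
      have htle : r + t ≤ j := by
        have := Finset.mem_range.mp ht; omega
      have hmul := Nat.choose_mul (n := j) (Nat.le_add_right r t)
      have hcast : ((j.choose (r+t) : ℤ) * ((r+t).choose r : ℤ))
          = (j.choose r : ℤ) * ((j - r).choose (r + t - r) : ℤ) := by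
        exact_mod_cast congrArg (Nat.cast : ℕ → ℤ) hmul
      have hsign : (-1:ℤ)^((r+t)+r) = (-1:ℤ)^t := by
        rw [show (r+t)+r = 2*r + t by omega, pow_add, pow_mul]
        simp
      rw [hsign]
      have h2 : r + t - r = t := by omega
      rw [h2] at hcast
      calc (-1:ℤ)^t * ((r+t).choose r : ℤ) * (j.choose (r+t) : ℤ)
          = (-1:ℤ)^t * ((j.choose (r+t) : ℤ) * ((r+t).choose r : ℤ)) := by ring
        _ = (-1:ℤ)^t * ((j.choose r : ℤ) * ((j-r).choose t : ℤ)) := by rw [hcast]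
        _ = (j.choose r : ℤ) * ((-1:ℤ)^t * ((j-r).choose t : ℤ)) := by ring
    rw [Finset.sum_congr rfl hterm, ← Finset.mul_sum, Int.alternating_sum_range_choose]
    by_cases hjr : j = r
    · subst hjr; simp
    · have : j - r ≠ 0 := by omega
      rw [if_neg this, if_neg hjr, mul_zero]
  · rw [if_neg (by omega : j ≠ r)]
    refine Finset.sum_eq_zero fun s hs => ?_
    have : s < r := by
      have := Finset.mem_range.mp hs; omega
    rw [Nat.choose_eq_zero_of_lt this]
    simp

/-- `K`-version of key identity 1, in the form needed below. -/
private lemma keyK {K : Type*} [NontriviallyNormedField K] (r j : ℕ) :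
    (∑ m ∈ Finset.range (r+1),
        (-1:K)^(r+m+j) * (r.choose m : K) * (((m+j).choose m : ℕ) : K))
      = (-1:K)^j * ((j.choose r : ℕ) : K) := by
  have hZ : (∑ m ∈ Finset.range (r+1), (-1:ℤ)^m * (r.choose m : ℤ) * ((m+j).choose m : ℤ))
      = (-1:ℤ)^r * (j.choose r : ℤ) := by
    have h := keyD j r j
    calc (∑ m ∈ Finset.range (r+1), (-1:ℤ)^m * (r.choose m : ℤ) * ((m+j).choose m : ℤ))
        = ∑ m ∈ Finset.range (r+1), (-1:ℤ)^m * (r.choose m : ℤ) * ((m+j).choose j : ℤ) := by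
          refine Finset.sum_congr rfl fun m _ => ?_
          rw [Nat.choose_symm_add]
      _ = (-1:ℤ)^r * (if r ≤ j then ((j.choose (j-r) : ℕ) : ℤ) else 0) := h
      _ = (-1:ℤ)^r * (j.choose r : ℤ) := by
          by_cases hrj : r ≤ j
          · rw [if_pos hrj, Nat.choose_symm hrj]
          · rw [if_neg hrj, Nat.choose_eq_zero_of_lt (by omega : j < r)]
            simp
  have hK := congrArg (fun z : ℤ => (z : K)) hZ
  push_cast at hK
  calc (∑ m ∈ Finset.range (r+1),
          (-1:K)^(r+m+j) * (r.choose m : K) * (((m+j).choose m : ℕ) : K))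
      = (-1:K)^(r+j) * ∑ m ∈ Finset.range (r+1),
          (-1:K)^m * (r.choose m : K) * (((m+j).choose m : ℕ) : K) := by
        rw [Finset.mul_sum]
        refine Finset.sum_congr rfl fun m _ => ?_
        rw [show r+m+j = (r+j)+m by omega, pow_add]
        ring
    _ = (-1:K)^(r+j) * ((-1:K)^r * ((j.choose r : ℕ) : K)) := by rw [hK]
    _ = (-1:K)^j * ((j.choose r : ℕ) : K) := by
        rw [pow_add, show (-1:K)^r * (-1:K)^j * ((-1:K)^r * _) = ((-1:K)^r * (-1:K)^r) * ((-1:K)^j * ((j.choose r : ℕ) : K)) from by ring, ← pow_add,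
          show r + r = 2*r by omega, pow_mul]
        simp

/-- The canonical embedding `ℤ_[p] → K` (where `K` plays the role of `ℂ_p`,
a complete nontrivially normed field extension of `ℚ_[p]`). -/
noncomputable def pc (p : ℕ) [Fact p.Prime] (K : Type*) [NontriviallyNormedField K]
    [NormedAlgebra ℚ_[p] K] (x : ℤ_[p]) : K :=
  algebraMap ℚ_[p] K x

/-- The operator `S` : `S(f)(x) = f(x) - x·f(x-1)`. -/
noncomputable def Sop (p : ℕ) [Fact p.Prime] (K : Type*) [NontriviallyNormedField K]
    [NormedAlgebra ℚ_[p] K] (f : ℤ_[p] → K) : ℤ_[p] → K :=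
  fun x => f x - pc p K x * f (x - 1)

/-- The Mahler basis function `βₙ(x) = C(x,n) = x(x-1)⋯(x-n+1)/n!`, valued in `K`. -/
noncomputable def bK (p : ℕ) [Fact p.Prime] (K : Type*) [NontriviallyNormedField K]
    [NormedAlgebra ℚ_[p] K] (n : ℕ) (x : ℤ_[p]) : K :=
  (∏ i ∈ Finset.range n, (pc p K x - (i : K))) / (n.factorial : K)

/-- The term of the pairing: `(-1)ⁿ Σ_{k=0}^n C(n,k) aₖ bₙ₋ₖ`. -/
def pairTerm (K : Type*) [NontriviallyNormedField K] (a b : ℕ → K) (n : ℕ) : K :=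
  (-1) ^ n * ∑ k ∈ Finset.range (n + 1), (n.choose k : K) * a k * b (n - k)

/-- The pairing `⟨φ, ψ⟩ = Σₙ (-1)ⁿ Σ_{k=0}^n C(n,k) aₖ bₙ₋ₖ` on Mahler
coefficient sequences. -/
noncomputable def pairing (K : Type*) [NontriviallyNormedField K] (a b : ℕ → K) : K :=
  ∑' n : ℕ, pairTerm K a b n

section MainAux

variable {K : Type*} [NontriviallyNormedField K] [IsUltrametricDist K] [CompleteSpace K]

/-- In a complete ultrametric field, null sequences are summable. -/
private lemma summable_of_null {f : ℕ → K} (h : Tendsto f atTop (nhds 0)) : Summable f :=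
  NonarchimedeanAddGroup.summable_of_tendsto_cofinite_zero (by rwa [Nat.cofinite_eq_atTop])

omit [CompleteSpace K] in
private lemma key_norm (e c : ℕ) (x : K) : ‖(-1:K)^e * (c : K) * x‖ ≤ ‖x‖ := by
  rw [mul_assoc, norm_mul, norm_pow, norm_neg, norm_one, one_pow, one_mul, norm_mul]
  exact mul_le_of_le_one_left (norm_nonneg x) (IsUltrametricDist.norm_natCast_le_one K c)

omit [CompleteSpace K] in
private lemma null_aux (e : ℕ → ℕ) (c : ℕ → ℕ) {b : ℕ → K}
    (hb : Tendsto b atTop (nhds 0)) :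
    Tendsto (fun j => (-1:K)^(e j) * (c j : K) * b j) atTop (nhds 0) :=
  squeeze_zero_norm (fun j => key_norm (e j) (c j) (b j)) (by simpa using hb.norm)

omit [CompleteSpace K] in
/-- `pairTerm` tends to zero for null sequences. -/
private lemma pairTerm_null {a b : ℕ → K}
    (ha : Tendsto a atTop (nhds 0)) (hb : Tendsto b atTop (nhds 0)) :
    Tendsto (pairTerm K a b) atTop (nhds 0) := by
  obtain ⟨Ma, hMa⟩ : ∃ M : ℝ, ∀ k, ‖a k‖ ≤ M := by
    obtain ⟨M, hM⟩ := ha.norm.bddAbove_range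
    exact ⟨M, fun k => hM ⟨k, rfl⟩⟩
  obtain ⟨Mb, hMb⟩ : ∃ M : ℝ, ∀ k, ‖b k‖ ≤ M := by
    obtain ⟨M, hM⟩ := hb.norm.bddAbove_range
    exact ⟨M, fun k => hM ⟨k, rfl⟩⟩
  set M : ℝ := max Ma (max Mb 1) with hMdef
  have hM1 : (1:ℝ) ≤ M := le_max_of_le_right (le_max_right _ _)
  have hMpos : (0:ℝ) < M := lt_of_lt_of_le one_pos hM1
  have hMa' : ∀ k, ‖a k‖ ≤ M := fun k => (hMa k).trans (le_max_left _ _)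
  have hMb' : ∀ k, ‖b k‖ ≤ M := fun k => (hMb k).trans (le_max_of_le_right (le_max_left _ _))
  rw [NormedAddCommGroup.tendsto_nhds_zero]
  intro ε hε
  have hεM : (0:ℝ) < ε/2/M := by positivity
  obtain ⟨Na, hNa⟩ := eventually_atTop.mp
    ((NormedAddCommGroup.tendsto_nhds_zero.mp ha) (ε/2/M) hεM)
  obtain ⟨Nb, hNb⟩ := eventually_atTop.mp
    ((NormedAddCommGroup.tendsto_nhds_zero.mp hb) (ε/2/M) hεM)
  rw [eventually_atTop]
  refine ⟨Na + Nb, fun n hn => ?_⟩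
  have hle : ‖pairTerm K a b n‖ ≤ ε/2 := by
    have : pairTerm K a b n
        = (-1:K)^n * ∑ k ∈ Finset.range (n + 1), (n.choose k : K) * a k * b (n - k) := rfl
    rw [this, norm_mul, norm_pow, norm_neg, norm_one, one_pow, one_mul]
    refine IsUltrametricDist.norm_sum_le_of_forall_le_of_nonneg (by positivity) fun k hk => ?_
    have hC : ‖((n.choose k : ℕ) : K)‖ ≤ 1 := IsUltrametricDist.norm_natCast_le_one K _
    rw [norm_mul, norm_mul]
    by_cases hka : Na ≤ k
    · have h1 : ‖a k‖ ≤ ε/2/M := (hNa k hka).le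
      calc ‖((n.choose k : ℕ) : K)‖ * ‖a k‖ * ‖b (n-k)‖ ≤ 1 * (ε/2/M) * M := by
            refine mul_le_mul (mul_le_mul hC h1 (norm_nonneg _) zero_le_one) (hMb' _)
              (norm_nonneg _) (by positivity)
        _ = ε/2 := by field_simp
    · have hkb : Nb ≤ n - k := by
        have := Finset.mem_range.mp hk
        omega
      have h1 : ‖b (n-k)‖ ≤ ε/2/M := (hNb _ hkb).le
      calc ‖((n.choose k : ℕ) : K)‖ * ‖a k‖ * ‖b (n-k)‖ ≤ 1 * M * (ε/2/M) := by
            refine mul_le_mul (mul_le_mul hC (hMa' _) (norm_nonneg _) zero_le_one) h1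
              (norm_nonneg _) (by positivity)
        _ = ε/2 := by field_simp
  linarith

end MainAux

/-- The pairing `⟨φ, ψ⟩ = Σₙ (-1)ⁿ Σ_{k=0}^n C(n,k) aₖ bₙ₋ₖ`
(on Mahler coefficients, i.e. on null sequences `a`, `b`) converges, is a
symmetric `K`-bilinear form, and is non-degenerate. -/
theorem stmt_15 (p : ℕ) [Fact p.Prime] (K : Type*) [NontriviallyNormedField K]
    [NormedAlgebra ℚ_[p] K] [CompleteSpace K] :
    (∀ a b : ℕ → K, Tendsto a atTop (nhds 0) → Tendsto b atTop (nhds 0) →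
      Summable (pairTerm K a b)) ∧
    (∀ a b : ℕ → K, Tendsto a atTop (nhds 0) → Tendsto b atTop (nhds 0) →
      pairing K a b = pairing K b a) ∧
    (∀ a a' b : ℕ → K, Tendsto a atTop (nhds 0) → Tendsto a' atTop (nhds 0) →
      Tendsto b atTop (nhds 0) → ∀ c : K,
      pairing K (fun n => c * a n + a' n) b = c * pairing K a b + pairing K a' b) ∧
    (∀ b : ℕ → K, Tendsto b atTop (nhds 0) →
      (∀ a : ℕ → K, Tendsto a atTop (nhds 0) → pairing K a b = 0) → b = 0) := by
  classical
  haveI hU : IsUltrametricDist K := by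
    refine IsUltrametricDist.isUltrametricDist_of_forall_norm_natCast_le_one fun n => ?_
    have h1 : (n : K) = algebraMap ℚ_[p] K (n : ℚ_[p]) := (map_natCast (algebraMap ℚ_[p] K) n).symm
    rw [h1, norm_algebraMap']
    have : ((n : ℤ) : ℚ_[p]) = (n : ℚ_[p]) := by push_cast; ring
    rw [← this]
    exact Padic.norm_int_le_one _
  -- Part 1: convergence
  have part1 : ∀ a b : ℕ → K, Tendsto a atTop (nhds 0) → Tendsto b atTop (nhds 0) →
      Summable (pairTerm K a b) := fun a b ha hb => summable_of_null (pairTerm_null ha hb)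
  refine ⟨part1, ?_, ?_, ?_⟩
  -- Part 2: symmetry
  · intro a b _ _
    refine tsum_congr fun n => ?_
    show (-1:K)^n * ∑ k ∈ Finset.range (n + 1), (n.choose k : K) * a k * b (n - k)
        = (-1:K)^n * ∑ k ∈ Finset.range (n + 1), (n.choose k : K) * b k * a (n - k)
    congr 1
    rw [← Finset.sum_range_reflect (fun k => (n.choose k : K) * b k * a (n - k)) (n+1)]
    refine Finset.sum_congr rfl fun k hk => ?_
    have hkn : k ≤ n := Nat.lt_succ_iff.mp (Finset.mem_range.mp hk)
    have h1 : n + 1 - 1 - k = n - k := by omega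
    rw [h1, Nat.choose_symm hkn, Nat.sub_sub_self hkn]
    ring
  -- Part 3: linearity
  · intro a a' b ha ha' hb c
    have hlin : ∀ n, pairTerm K (fun n => c * a n + a' n) b n
        = c * pairTerm K a b n + pairTerm K a' b n := by
      intro n
      show (-1:K)^n * ∑ k ∈ Finset.range (n + 1), (n.choose k : K) * (c * a k + a' k) * b (n - k)
          = c * ((-1:K)^n * ∑ k ∈ Finset.range (n + 1), (n.choose k : K) * a k * b (n - k))
            + (-1:K)^n * ∑ k ∈ Finset.range (n + 1), (n.choose k : K) * a' k * b (n - k)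
      have : ∀ k ∈ Finset.range (n+1),
          (n.choose k : K) * (c * a k + a' k) * b (n - k)
          = c * ((n.choose k : K) * a k * b (n - k)) + (n.choose k : K) * a' k * b (n - k) :=
        fun k _ => by ring
      rw [Finset.sum_congr rfl this, Finset.sum_add_distrib, ← Finset.mul_sum]
      ring
    show (∑' n, pairTerm K (fun n => c * a n + a' n) b n)
        = c * (∑' n, pairTerm K a b n) + ∑' n, pairTerm K a' b n
    rw [tsum_congr hlin,
      Summable.tsum_add ((part1 a b ha hb).mul_left c) (part1 a' b ha' hb), tsum_mul_left]
  -- Part 4: non-degeneracy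
  · intro b hb hpair
    -- Step A: pairing against Kronecker deltas
    have hG : ∀ m : ℕ, (∑' j : ℕ, ((-1:K)^(m+j) * (((m+j).choose m : ℕ) : K) * b j)) = 0 := by
      intro m
      set δ : ℕ → K := fun k => if k = m then (1:K) else 0 with hδdef
      have hδ : Tendsto δ atTop (nhds 0) := by
        have h1 : ∀ᶠ k in atTop, (0:K) = δ k := by
          filter_upwards [eventually_gt_atTop m] with k hk
          have hkm : k ≠ m := by omega
          simp [hδdef, hkm]
        exact tendsto_const_nhds.congr' h1
      have h0 : (∑' n, pairTerm K δ b n) = 0 := hpair δ hδ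
      have hterm : ∀ n, pairTerm K δ b n
          = if m ≤ n then ((-1:K)^n * ((n.choose m : ℕ) : K) * b (n - m)) else 0 := by
        intro n
        show (-1:K)^n * ∑ k ∈ Finset.range (n + 1), (n.choose k : K) * δ k * b (n - k) = _
        have hc : ∀ k ∈ Finset.range (n+1),
            (n.choose k : K) * δ k * b (n - k)
            = if k = m then ((n.choose k : K) * b (n - k)) else 0 := by
          intro k _
          simp only [hδdef]
          split <;> simp
        rw [Finset.sum_congr rfl hc,
          Finset.sum_ite_eq' (Finset.range (n+1)) m (fun k => (n.choose k : K) * b (n - k))]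
        by_cases hmn : m ≤ n
        · rw [if_pos (Finset.mem_range.mpr (by omega)), if_pos hmn]; ring
        · rw [if_neg (by simp only [Finset.mem_range]; omega), if_neg hmn, mul_zero]
      have hinj : Function.Injective (fun j : ℕ => m + j) := add_right_injective m
      have hsupp : Function.support (fun n => pairTerm K δ b n)
          ⊆ Set.range (fun j : ℕ => m + j) := by
        intro n hn
        rcases le_or_gt m n with h | h
        · exact ⟨n - m, by show m + (n - m) = n; omega⟩
        · refine absurd ?_ hn
          show pairTerm K δ b n = 0
          rw [hterm n, if_neg (by omega)]
      have hre := hinj.tsum_eq hsupp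
      rw [← h0, ← hre]
      refine tsum_congr fun j => ?_
      rw [hterm (m+j), if_pos (Nat.le_add_right m j), Nat.add_sub_cancel_left]
    -- summability of the `G`-type and `H`-type families
    have hsummG : ∀ m : ℕ,
        Summable (fun j => (-1:K)^(m+j) * (((m+j).choose m : ℕ) : K) * b j) :=
      fun m => summable_of_null (null_aux (fun j => m + j) (fun j => (m+j).choose m) hb)
    have hsummH : ∀ s : ℕ,
        Summable (fun j => (-1:K)^j * ((j.choose s : ℕ) : K) * b j) :=
      fun s => summable_of_null (null_aux (fun j => j) (fun j => j.choose s) hb)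
    -- Step B: from `G = 0` deduce `H = 0`
    have hH : ∀ r : ℕ, (∑' j : ℕ, ((-1:K)^j * ((j.choose r : ℕ) : K) * b j)) = 0 := by
      intro r
      have hpt : ∀ j : ℕ, (-1:K)^j * ((j.choose r : ℕ) : K) * b j
          = ∑ m ∈ Finset.range (r+1),
              ((-1:K)^r * ((r.choose m : ℕ) : K))
                * ((-1:K)^(m+j) * (((m+j).choose m : ℕ) : K) * b j) := by
        intro j
        have h1 := keyK (K := K) r j
        calc (-1:K)^j * ((j.choose r : ℕ) : K) * b j
            = ((-1:K)^j * ((j.choose r : ℕ) : K)) * b j := by ring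
          _ = (∑ m ∈ Finset.range (r+1),
                (-1:K)^(r+m+j) * ((r.choose m : ℕ) : K) * (((m+j).choose m : ℕ) : K)) * b j := by
              rw [h1]
          _ = _ := by
              rw [Finset.sum_mul]
              refine Finset.sum_congr rfl fun m _ => ?_
              rw [show r+m+j = r+(m+j) by omega, pow_add]
              ring
      rw [tsum_congr hpt]
      have hsm : ∀ m ∈ Finset.range (r+1),
          Summable (fun j => ((-1:K)^r * ((r.choose m : ℕ) : K))
            * ((-1:K)^(m+j) * (((m+j).choose m : ℕ) : K) * b j)) :=
        fun m _ => (hsummG m).mul_left _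
      rw [Summable.tsum_finsetSum hsm]
      refine Finset.sum_eq_zero fun m _ => ?_
      rw [tsum_mul_left, hG m, mul_zero]
    -- Step C: conclude `b = 0`
    funext r
    show b r = 0
    have hmain : ∀ ε : ℝ, 0 < ε → ‖b r‖ ≤ ε := by
      intro ε hε
      obtain ⟨N₀, hN₀⟩ : ∃ N₀ : ℕ, ∀ j ≥ N₀, ‖b j‖ ≤ ε := by
        obtain ⟨N₀, h⟩ := eventually_atTop.mp
          ((NormedAddCommGroup.tendsto_nhds_zero.mp hb) ε hε)
        exact ⟨N₀, fun j hj => (h j hj).le⟩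
      set N : ℕ := max r N₀ with hNdef
      set e : ℕ → K := fun j => ∑ s ∈ Finset.range (N+1),
        (-1:K)^(s+r) * ((s.choose r : ℕ) : K) * ((-1:K)^j * ((j.choose s : ℕ) : K)) with hedef
      have heb : (∑' j, e j * b j) = 0 := by
        have hpt : ∀ j, e j * b j = ∑ s ∈ Finset.range (N+1),
            ((-1:K)^(s+r) * ((s.choose r : ℕ) : K))
              * ((-1:K)^j * ((j.choose s : ℕ) : K) * b j) := by
          intro j
          rw [hedef, Finset.sum_mul]
          exact Finset.sum_congr rfl fun s _ => by ring
        rw [tsum_congr hpt, Summable.tsum_finsetSum (fun s _ => (hsummH s).mul_left _)]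
        refine Finset.sum_eq_zero fun s _ => ?_
        rw [tsum_mul_left, hH s, mul_zero]
      have heval : ∀ j ≤ N, e j = (-1:K)^j * (if j = r then 1 else 0) := by
        intro j hj
        have hK' : (∑ s ∈ Finset.range (N+1),
            (-1:K)^(s+r) * ((s.choose r : ℕ) : K) * ((j.choose s : ℕ) : K))
            = if j = r then 1 else 0 := by
          have hc := congrArg (fun z : ℤ => (z : K)) (id2 r N j hj)
          push_cast at hc
          refine hc.trans ?_
          split <;> simp
        rw [hedef]
        calc (∑ s ∈ Finset.range (N+1),
              (-1:K)^(s+r) * ((s.choose r : ℕ) : K) * ((-1:K)^j * ((j.choose s : ℕ) : K)))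
            = (-1:K)^j * ∑ s ∈ Finset.range (N+1),
              (-1:K)^(s+r) * ((s.choose r : ℕ) : K) * ((j.choose s : ℕ) : K) := by
              rw [Finset.mul_sum]
              exact Finset.sum_congr rfl fun s _ => by ring
          _ = (-1:K)^j * (if j = r then 1 else 0) := by rw [hK']
      have hebd : ∀ j, ‖e j‖ ≤ 1 := by
        intro j
        rw [hedef]
        refine IsUltrametricDist.norm_sum_le_of_forall_le_of_nonneg zero_le_one fun s _ => ?_
        simp only [norm_mul, norm_pow, norm_neg, norm_one, one_pow, one_mul]
        exact mul_le_one₀ (IsUltrametricDist.norm_natCast_le_one K _) (norm_nonneg _)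
          (IsUltrametricDist.norm_natCast_le_one K _)
      have hsum_eb : Summable (fun j => e j * b j) := by
        refine summable_of_null (squeeze_zero_norm (a := fun j => ‖b j‖) (fun j => ?_)
          (by simpa using hb.norm))
        rw [norm_mul]
        exact mul_le_of_le_one_left (norm_nonneg _) (hebd j)
      set dlt : ℕ → K := fun j => if j = r then ((-1:K)^r * b r) else 0 with hdltdef
      have hsum_dlt : Summable dlt := by
        refine summable_of_null ?_
        have h1 : ∀ᶠ j in atTop, (0:K) = dlt j := by
          filter_upwards [eventually_gt_atTop r] with j hj
          have hjr : j ≠ r := by omega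
          simp [hdltdef, hjr]
        exact tendsto_const_nhds.congr' h1
      set d : ℕ → K := fun j => e j * b j - dlt j with hddef
      have hsum_d : Summable d := hsum_eb.sub hsum_dlt
      have htsum_dlt : (∑' j, dlt j) = (-1:K)^r * b r := tsum_ite_eq r _
      have hsplit : (∑' j, e j * b j) = (∑' j, dlt j) + (∑' j, d j) := by
        rw [← Summable.tsum_add hsum_dlt hsum_d]
        refine tsum_congr fun j => ?_
        simp only [hddef]
        ring
      have hdbd : ∀ j, ‖d j‖ ≤ ε := by
        intro j
        by_cases hj : j ≤ N
        · have hzero : d j = 0 := by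
            simp only [hddef, hdltdef, heval j hj]
            by_cases hjr : j = r
            · subst hjr; simp
            · simp [hjr]
          rw [hzero, norm_zero]
          exact hε.le
        · have hjr : j ≠ r := by
            have : r ≤ N := le_max_left _ _
            omega
          have h1 : d j = e j * b j := by simp [hddef, hdltdef, hjr]
          rw [h1, norm_mul]
          have h2 : ‖b j‖ ≤ ε := hN₀ j (by have : N₀ ≤ N := le_max_right _ _; omega)
          calc ‖e j‖ * ‖b j‖ ≤ 1 * ε :=
                mul_le_mul (hebd j) h2 (norm_nonneg _) zero_le_one
            _ = ε := one_mul ε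
      have hkey : (-1:K)^r * b r = - ∑' j, d j := by
        have h1 := heb
        rw [hsplit, htsum_dlt] at h1
        linear_combination h1
      have hnorm_eq : ‖b r‖ = ‖(-1:K)^r * b r‖ := by
        rw [norm_mul, norm_pow, norm_neg, norm_one, one_pow, one_mul]
      rw [hnorm_eq, hkey, norm_neg]
      exact IsUltrametricDist.norm_tsum_le_of_forall_le_of_nonneg hε.le hdbd
    by_contra hbr
    have h1 : 0 < ‖b r‖ := norm_pos_iff.mpr hbr
    have h2 := hmain (‖b r‖/2) (by positivity)
    linarith
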